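/- arXiv:1105.5014 — 2 statements merged into one kernel-verified Lean document; each statement's English description precedes it below -/
import Mathlib

section
/- For every integer n ≥ 1, every integer k with 1 ≤ k ≤ n, and real parameters θ > 0, ρ > 0, γ ≥ 0, one has C(n,k) · ∫₀¹ θ · e^{γx} · x^{k-1} · (1-x)^{n-k-1+ρ} dx = (θ/k) · (n(n-1)⋯(n-k+1)) / ((n-1+ρ)(n-2+ρ)⋯(n-k+ρ)) · (1 + Σ_{m=1}^∞ (k)_m γ^m / ((n+ρ)_m · m!)), where the integral is over the open unit interval. (This is the expected gene frequency spectrum E[G_k^{(n)}] in the Wright–Fisher model for bacterial genomes with horizontal gene flow, Theorem 1.) -/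
open scoped BigOperators
open MeasureTheory

/-- The real Pochhammer symbol `(a)_m = a (a+1) ⋯ (a+m-1)`. -/
noncomputable def pochR (a : ℝ) (m : ℕ) : ℝ := (ascPochhammer ℝ m).eval a

lemma pochR_eq_prod (a : ℝ) (m : ℕ) : pochR a m = ∏ j ∈ Finset.range m, (a + j) := by
  induction m with
  | zero => simp [pochR]
  | succ m ih =>
    rw [pochR, ascPochhammer_succ_eval, ← pochR, ih, Finset.prod_range_succ]

lemma pochR_pos {a : ℝ} (ha : 0 < a) (m : ℕ) : 0 < pochR a m := by
  rw [pochR_eq_prod]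
  exact Finset.prod_pos fun j _ => by positivity

lemma betaJ (c : ℝ) (hc : 0 < c) (p : ℕ) :
    ∫ x in Set.Ioo (0:ℝ) 1, x ^ p * (1 - x) ^ (c - 1) =
      (p.factorial : ℝ) / ∏ j ∈ Finset.range (p + 1), (c + j) := by
  have hre : (0:ℝ) < ((c : ℂ)).re := by simpa using hc
  have hB := Complex.betaIntegral_eval_nat_add_one_right hre p
  rw [Complex.betaIntegral_symm] at hB
  -- hB : Complex.betaIntegral (p+1) c = p! / ∏ (c+j)
  have hIoo : ∫ x in Set.Ioo (0:ℝ) 1, x ^ p * (1 - x) ^ (c - 1)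
      = ∫ x in (0:ℝ)..1, x ^ p * (1 - x) ^ (c - 1) := by
    rw [intervalIntegral.integral_of_le zero_le_one, integral_Ioc_eq_integral_Ioo]
  have key : Complex.betaIntegral ((p : ℂ) + 1) (c : ℂ)
      = ((∫ x in Set.Ioo (0:ℝ) 1, x ^ p * (1 - x) ^ (c - 1) : ℝ) : ℂ) := by
    rw [hIoo, Complex.betaIntegral, ← intervalIntegral.integral_ofReal]
    refine intervalIntegral.integral_congr fun x hx => ?_
    rw [Set.uIcc_of_le zero_le_one] at hx
    have hx0 : (0:ℝ) ≤ x := hx.1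
    have hx1 : (0:ℝ) ≤ 1 - x := by linarith [hx.2]
    have h1 : ((x : ℂ)) ^ ((p : ℂ) + 1 - 1) = ((x ^ p : ℝ) : ℂ) := by
      rw [add_sub_cancel_right, Complex.cpow_natCast]
      push_cast
      ring
    have h2 : ((1 : ℂ) - (x : ℂ)) ^ ((c : ℂ) - 1) = (((1 - x) ^ (c - 1) : ℝ) : ℂ) := by
      rw [Complex.ofReal_cpow hx1]
      push_cast
      ring_nf
    rw [h1, h2]
    push_cast
    ring
  rw [hB] at key
  have : ((p.factorial : ℝ) / ∏ j ∈ Finset.range (p + 1), (c + j) : ℝ) =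
      ((p.factorial : ℂ) / ∏ j ∈ Finset.range (p + 1), ((c : ℂ) + j)).re := by
    push_cast
    norm_cast
  rw [this, key, Complex.ofReal_re]

lemma betaJ_integrable (c : ℝ) (hc : 0 < c) (p : ℕ) :
    IntegrableOn (fun x : ℝ => x ^ p * (1 - x) ^ (c - 1)) (Set.Ioo 0 1) := by
  have hu : (0:ℝ) < ((p : ℂ) + 1).re := by
    simp only [Complex.add_re, Complex.natCast_re, Complex.one_re]
    positivity
  have hv : (0:ℝ) < ((c : ℂ)).re := by simpa using hc
  have hC := Complex.betaIntegral_convergent hu hv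
  have hC' : IntegrableOn (fun x : ℝ => (x : ℂ) ^ ((p : ℂ) + 1 - 1) * ((1:ℂ) - x) ^ ((c : ℂ) - 1))
      (Set.Ioo 0 1) := by
    have := (intervalIntegrable_iff_integrableOn_Ioc_of_le zero_le_one).mp hC
    exact this.mono_set Set.Ioo_subset_Ioc_self
  have hre2 : IntegrableOn
      (fun x : ℝ => ((x : ℂ) ^ ((p : ℂ) + 1 - 1) * ((1:ℂ) - x) ^ ((c : ℂ) - 1)).re)
      (Set.Ioo 0 1) := hC'.re
  refine hre2.congr_fun (fun x hx => ?_) measurableSet_Ioo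
  have hx0 : (0:ℝ) ≤ x := le_of_lt hx.1
  have hx1 : (0:ℝ) ≤ 1 - x := by linarith [le_of_lt hx.2]
  have h1 : ((x : ℂ)) ^ ((p : ℂ) + 1 - 1) = ((x ^ p : ℝ) : ℂ) := by
    rw [add_sub_cancel_right, Complex.cpow_natCast]; push_cast; ring
  have h2 : ((1 : ℂ) - (x : ℂ)) ^ ((c : ℂ) - 1) = (((1 - x) ^ (c - 1) : ℝ) : ℂ) := by
    rw [Complex.ofReal_cpow hx1]; push_cast; ring_nf
  simp only [h1, h2, ← Complex.ofReal_mul, Complex.ofReal_re]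

lemma fact_shift (k : ℕ) (hk : 1 ≤ k) (m : ℕ) :
    ((k - 1 + m).factorial : ℝ) = ((k-1).factorial : ℝ) * pochR k m := by
  induction m with
  | zero => simp [pochR]
  | succ m ih =>
    have h1 : k - 1 + (m + 1) = (k - 1 + m) + 1 := by omega
    have h2 : ((k - 1 + m + 1 : ℕ) : ℝ) = (k : ℝ) + m := by
      have : k - 1 + m + 1 = k + m := by omega
      rw [this]; push_cast; ring
    rw [h1, Nat.factorial_succ, pochR, ascPochhammer_succ_eval, ← pochR]
    push_cast [ih]
    have h3 : ((k - 1 : ℕ) : ℝ) = (k : ℝ) - 1 := by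
      rw [Nat.cast_sub hk]; simp
    rw [h3]; ring

lemma choose_fact (n k : ℕ) (hkn : k ≤ n) :
    (n.choose k : ℝ) * (k.factorial : ℝ) = ∏ j ∈ Finset.range k, ((n:ℝ) - j) := by
  induction k with
  | zero => simp
  | succ k ih =>
    have hk : k ≤ n := by omega
    have hcs := Nat.choose_succ_right_eq n k
    have hcast : ((n - k : ℕ) : ℝ) = (n : ℝ) - k := by
      rw [Nat.cast_sub hk]
    have : (n.choose (k+1) : ℝ) * (k+1) = (n.choose k : ℝ) * ((n:ℝ) - k) := by
      rw [← hcast]; exact_mod_cast congrArg (Nat.cast : ℕ → ℝ) hcs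
    rw [Finset.prod_range_succ, ← ih hk, Nat.factorial_succ]
    push_cast
    nlinarith [this]

/-- Theorem 1 (gene frequency spectrum): for `1 ≤ k ≤ n`, `θ > 0`, `ρ > 0`, `γ ≥ 0`,
`C(n,k) ∫₀¹ θ e^{γx} x^{k-1} (1-x)^{n-k-1+ρ} dx
  = (θ/k) ⬝ n⋯(n-k+1)/((n-1+ρ)⋯(n-k+ρ)) ⬝ (1 + Σ_{m≥1} (k)_m γ^m /((n+ρ)_m m!))`. -/
theorem gene_frequency_spectrum
    (n k : ℕ) (hn : 1 ≤ n) (hk : 1 ≤ k) (hkn : k ≤ n)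
    (θ ρ γ : ℝ) (hθ : 0 < θ) (hρ : 0 < ρ) (hγ : 0 ≤ γ) :
    (n.choose k : ℝ) *
      ∫ x in Set.Ioo (0 : ℝ) 1,
        θ * Real.exp (γ * x) * x ^ (k - 1) * (1 - x) ^ ((n : ℝ) - k - 1 + ρ) =
    θ / k * ((∏ j ∈ Finset.range k, ((n : ℝ) - j)) /
        (∏ j ∈ Finset.range k, ((n : ℝ) - 1 - j + ρ))) *
      (1 + ∑' m : ℕ,
        pochR k (m + 1) * γ ^ (m + 1) /
          (pochR ((n : ℝ) + ρ) (m + 1) * (Nat.factorial (m + 1)))) := by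
  have hkn' : (k : ℝ) ≤ n := by exact_mod_cast hkn
  have hk' : (1 : ℝ) ≤ k := by exact_mod_cast hk
  set c : ℝ := (n : ℝ) - k + ρ with hcdef
  have hc : 0 < c := by rw [hcdef]; linarith
  have hce : (n : ℝ) - k - 1 + ρ = c - 1 := by rw [hcdef]; ring
  set g : ℕ → ℝ → ℝ :=
    fun m x => (θ * γ ^ m / m.factorial) * (x ^ (k - 1 + m) * (1 - x) ^ (c - 1)) with hgdef
  -- integrability
  have hint : ∀ m, IntegrableOn (g m) (Set.Ioo (0:ℝ) 1) := fun m =>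
    (betaJ_integrable c hc (k - 1 + m)).const_mul _
  -- values of the integrals
  have hval : ∀ m, ∫ x in Set.Ioo (0:ℝ) 1, g m x
      = (θ * γ ^ m / m.factorial) *
        (((k - 1 + m).factorial : ℝ) / ∏ j ∈ Finset.range (k + m), (c + j)) := by
    intro m
    have hrange : k - 1 + m + 1 = k + m := by omega
    rw [hgdef]
    simp only
    rw [MeasureTheory.integral_const_mul, betaJ c hc, hrange]
  -- uniform bound on the beta values
  have hfle : ∀ p : ℕ,
      (p.factorial : ℝ) / ∏ j ∈ Finset.range (p + 1), (c + j) ≤ 1 / c := by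
    intro p
    have hprodpos : 0 < ∏ j ∈ Finset.range (p + 1), (c + j) :=
      Finset.prod_pos fun j _ => by positivity
    have hfacteq : (p.factorial : ℝ) = ∏ j ∈ Finset.range p, ((j : ℝ) + 1) := by
      rw [← Finset.prod_range_add_one_eq_factorial]
      push_cast
      rfl
    have hstep : (p.factorial : ℝ) ≤ ∏ j ∈ Finset.range p, (c + ((j:ℝ) + 1)) := by
      rw [hfacteq]
      refine Finset.prod_le_prod (fun j _ => by positivity) (fun j _ => by linarith)
    have hprod : c * (p.factorial : ℝ) ≤ ∏ j ∈ Finset.range (p + 1), (c + j) := by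
      rw [Finset.prod_range_succ']
      simp only [Nat.cast_zero, add_zero]
      push_cast
      nlinarith [hstep]
    rw [div_le_div_iff₀ hprodpos hc]
    nlinarith [hprod]
  -- norms
  have hnorm : ∀ m, ∫ x in Set.Ioo (0:ℝ) 1, ‖g m x‖ = ∫ x in Set.Ioo (0:ℝ) 1, g m x := by
    intro m
    refine MeasureTheory.setIntegral_congr_fun measurableSet_Ioo fun x hx => ?_
    have hx0 := hx.1
    have hx1 : (0:ℝ) < 1 - x := by linarith [hx.2]
    have hnng : 0 ≤ g m x := by
      rw [hgdef]; simp only; positivity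
    exact Real.norm_of_nonneg hnng
  have hsum_norm : Summable (fun m => ∫ x in Set.Ioo (0:ℝ) 1, ‖g m x‖) := by
    refine Summable.of_nonneg_of_le
      (fun m => MeasureTheory.integral_nonneg fun x => norm_nonneg _) (fun m => ?_)
      ((Real.summable_pow_div_factorial γ).mul_left (θ / c))
    have hrange : k - 1 + m + 1 = k + m := by omega
    have h1 := hfle (k - 1 + m)
    rw [hrange] at h1
    rw [hnorm m, hval m]
    have h2 : 0 ≤ θ * γ ^ m / m.factorial := by positivity
    calc (θ * γ ^ m / m.factorial) *
          (((k - 1 + m).factorial : ℝ) / ∏ j ∈ Finset.range (k + m), (c + j))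
        ≤ (θ * γ ^ m / m.factorial) * (1 / c) := by
          apply mul_le_mul_of_nonneg_left h1 h2
      _ = θ / c * (γ ^ m / m.factorial) := by ring
  -- swap sum and integral
  have hswap : ∑' m, ∫ x in Set.Ioo (0:ℝ) 1, g m x
      = ∫ x in Set.Ioo (0:ℝ) 1, ∑' m, g m x :=
    MeasureTheory.integral_tsum_of_summable_integral_norm hint hsum_norm
  -- pointwise series expansion of the integrand
  have hA : ∀ x : ℝ, (∑' m, g m x) = θ * Real.exp (γ * x) * x ^ (k - 1) * (1 - x) ^ (c - 1) := by
    intro x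
    have hexp : Real.exp (γ * x) = ∑' m : ℕ, (γ * x) ^ m / m.factorial := by
      rw [Real.exp_eq_exp_ℝ, NormedSpace.exp_eq_tsum_div]
    have h1 : ∀ m : ℕ, g m x
        = ((γ * x) ^ m / m.factorial) * (θ * x ^ (k - 1) * (1 - x) ^ (c - 1)) := by
      intro m; rw [hgdef]; simp only; rw [mul_pow, pow_add]; ring
    rw [tsum_congr h1, tsum_mul_right, ← hexp]
    ring
  have hInt : ∫ x in Set.Ioo (0:ℝ) 1,
      θ * Real.exp (γ * x) * x ^ (k - 1) * (1 - x) ^ ((n : ℝ) - k - 1 + ρ)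
      = ∑' m, ∫ x in Set.Ioo (0:ℝ) 1, g m x := by
    rw [hce, hswap]
    exact MeasureTheory.integral_congr_ae (Filter.Eventually.of_forall fun x => (hA x).symm)
  -- algebraic facts
  have hQc : ∏ j ∈ Finset.range k, (c + j)
      = ∏ j ∈ Finset.range k, ((n : ℝ) - 1 - j + ρ) := by
    rw [← Finset.prod_range_reflect (fun j => (n : ℝ) - 1 - (j : ℝ) + ρ) k]
    refine Finset.prod_congr rfl fun j hj => ?_
    rw [Finset.mem_range] at hj
    have h1 : j ≤ k - 1 := by omega
    have h2 : ((k - 1 - j : ℕ) : ℝ) = (k : ℝ) - 1 - j := by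
      rw [Nat.cast_sub h1, Nat.cast_sub hk]; push_cast; ring
    rw [hcdef]
    simp only [h2]
    ring
  have hsplit : ∀ m, ∏ j ∈ Finset.range (k + m), (c + j)
      = (∏ j ∈ Finset.range k, (c + j)) * pochR ((n : ℝ) + ρ) m := by
    intro m
    rw [Finset.prod_range_add, pochR_eq_prod]
    congr 1
    refine Finset.prod_congr rfl fun j _ => ?_
    rw [hcdef]; push_cast; ring
  have hchoose : (n.choose k : ℝ) * ((k - 1).factorial : ℝ) * k
      = ∏ j ∈ Finset.range k, ((n : ℝ) - j) := by
    rw [← choose_fact n k hkn]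
    have hfk : ((k - 1).factorial : ℝ) * k = (k.factorial : ℝ) := by
      rw [← Nat.mul_factorial_pred (by omega : k ≠ 0)]; push_cast; ring
    rw [mul_assoc, hfk]
  have hQpos : 0 < ∏ j ∈ Finset.range k, ((n : ℝ) - 1 - j + ρ) := by
    refine Finset.prod_pos fun j hj => ?_
    rw [Finset.mem_range] at hj
    have : (j : ℝ) + 1 ≤ k := by exact_mod_cast hj
    linarith
  have hnρ : (0 : ℝ) < (n : ℝ) + ρ := by
    have : (1 : ℝ) ≤ n := by exact_mod_cast hn
    linarith
  have hppos : ∀ m, 0 < pochR ((n : ℝ) + ρ) m := fun m => pochR_pos hnρ m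
  have hkpos : (0 : ℝ) < k := by linarith
  -- the normalized terms
  set t : ℕ → ℝ := fun m => pochR k m * γ ^ m / (pochR ((n : ℝ) + ρ) m * m.factorial) with htdef
  set A : ℝ := θ / k * ((∏ j ∈ Finset.range k, ((n : ℝ) - j)) /
      (∏ j ∈ Finset.range k, ((n : ℝ) - 1 - j + ρ))) with hAdef
  have hpoint : ∀ m, (n.choose k : ℝ) *
      ((θ * γ ^ m / m.factorial) *
        (((k - 1 + m).factorial : ℝ) / ∏ j ∈ Finset.range (k + m), (c + j)))
      = A * t m := by
    intro m
    rw [fact_shift k hk m, hsplit m, hQc, hAdef, htdef, ← hchoose]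
    simp only
    have h1 : (m.factorial : ℝ) ≠ 0 := by positivity
    have h2 : (k : ℝ) ≠ 0 := ne_of_gt hkpos
    have h3 : (∏ j ∈ Finset.range k, ((n : ℝ) - 1 - j + ρ)) ≠ 0 := ne_of_gt hQpos
    have h4 : pochR ((n : ℝ) + ρ) m ≠ 0 := ne_of_gt (hppos m)
    field_simp
  -- summability of t
  have hkR : (0 : ℝ) < (k : ℝ) := hkpos
  have htnn : ∀ m, 0 ≤ t m := fun m => by
    rw [htdef]; simp only
    have := pochR_pos hkR m
    have h2 : (0:ℝ) < pochR ((n : ℝ) + ρ) m := hppos m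
    positivity
  have htle : ∀ m, t m ≤ γ ^ m / m.factorial := by
    intro m
    rw [htdef]; simp only
    have hle : pochR (k : ℝ) m ≤ pochR ((n : ℝ) + ρ) m := by
      rw [pochR_eq_prod, pochR_eq_prod]
      refine Finset.prod_le_prod (fun j _ => by positivity) (fun j _ => by linarith)
    have h4 : (0:ℝ) < pochR ((n : ℝ) + ρ) m := hppos m
    have h1 : (0:ℝ) < (m.factorial : ℝ) := by positivity
    calc pochR (k : ℝ) m * γ ^ m / (pochR ((n : ℝ) + ρ) m * m.factorial)
        ≤ pochR ((n : ℝ) + ρ) m * γ ^ m / (pochR ((n : ℝ) + ρ) m * m.factorial) := by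
          gcongr
      _ = γ ^ m / m.factorial := by
          rw [mul_div_mul_left _ _ (ne_of_gt h4)]
  have hts : Summable t :=
    Summable.of_nonneg_of_le htnn htle (Real.summable_pow_div_factorial γ)
  have ht0 : t 0 = 1 := by rw [htdef]; simp [pochR]
  -- conclude
  calc (n.choose k : ℝ) *
      ∫ x in Set.Ioo (0 : ℝ) 1,
        θ * Real.exp (γ * x) * x ^ (k - 1) * (1 - x) ^ ((n : ℝ) - k - 1 + ρ)
      = (n.choose k : ℝ) * ∑' m, ∫ x in Set.Ioo (0:ℝ) 1, g m x := by rw [hInt]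
    _ = ∑' m, (n.choose k : ℝ) * ∫ x in Set.Ioo (0:ℝ) 1, g m x := tsum_mul_left.symm
    _ = ∑' m, A * t m := tsum_congr fun m => by rw [hval m]; exact hpoint m
    _ = A * ∑' m, t m := tsum_mul_left
    _ = A * (t 0 + ∑' m, t (m + 1)) := by rw [Summable.tsum_eq_zero_add hts]
    _ = A * (1 + ∑' m : ℕ,
        pochR k (m + 1) * γ ^ (m + 1) /
          (pochR ((n : ℝ) + ρ) (m + 1) * (Nat.factorial (m + 1)))) := by
        rw [ht0]
end

section
/- For every integer n ≥ 1 and real numbers θ > 0, ρ > 0, γ ≥ 0, one has Σ_{k=1}^{n} [ C(n,k) · ∫₀¹ θ · e^{γx} · x^{k-1} · (1-x)^{n-k-1+ρ} dx ] = θ · Σ_{k=0}^{n-1} 1/(k+ρ) + θ · Σ_{m=1}^∞ (γ^m / m) · ( 1/(ρ)_m − 1/(n+ρ)_m ). (This is the expected size of the accessory genome of a sample of size n, E[G^{(n)}], from Corollary 2.) -/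
open scoped BigOperators
open MeasureTheory

lemma pochR_one (a : ℝ) : pochR a 1 = a := by simp [pochR, ascPochhammer_one]

lemma pochR_succ (a : ℝ) (m : ℕ) : pochR a (m + 1) = pochR a m * (a + m) :=
  ascPochhammer_succ_eval m a

lemma pochR_succ_left (a : ℝ) (m : ℕ) : pochR a (m + 1) = a * pochR (a + 1) m := by
  unfold pochR
  rw [ascPochhammer_succ_left]
  simp [Polynomial.eval_comp]

lemma factorial_mul_le_pochR {s : ℝ} (hs : 0 < s) (m : ℕ) :
    s * m.factorial ≤ pochR s (m + 1) := by
  induction m with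
  | zero => simp [pochR_one]
  | succ m ih =>
      rw [pochR_succ]
      have h1 : (0:ℝ) < pochR s (m+1) := pochR_pos hs _
      have h2 : ((m:ℝ) + 1) ≤ s + (m + 1) := by linarith
      calc s * ((m+1).factorial : ℝ) = (s * m.factorial) * ((m:ℝ)+1) := by
            push_cast [Nat.factorial_succ]; ring
        _ ≤ pochR s (m+1) * (s + (m+1)) := by
            apply mul_le_mul ih h2 (by positivity) h1.le
        _ = pochR s (m+1) * (s + ↑(m+1)) := by push_cast; ring

lemma pochR_telescope {a : ℝ} (ha : 0 < a) (m : ℕ) :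
    1 / pochR a (m + 1) - 1 / pochR (a + 1) (m + 1) = ((m:ℝ) + 1) / pochR a (m + 2) := by
  have h1 : pochR a (m + 2) = pochR a (m + 1) * (a + (m + 1)) := by
    rw [pochR_succ]; push_cast; ring_nf
  have h2 : pochR a (m + 2) = a * pochR (a + 1) (m + 1) := pochR_succ_left a (m+1)
  have p1 : (0:ℝ) < pochR a (m+1) := pochR_pos ha _
  have p2 : (0:ℝ) < pochR (a+1) (m+1) := pochR_pos (by linarith) _
  have p3 : (0:ℝ) < pochR a (m+2) := pochR_pos ha _
  field_simp
  nlinarith [h1, h2, p1, p2, p3]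

lemma pochR_sum_telescope {ρ : ℝ} (hρ : 0 < ρ) (n m : ℕ) :
    ∑ j ∈ Finset.range n, 1 / pochR ((j:ℝ) + ρ) (m + 2)
      = (1 / ((m:ℝ) + 1)) * (1 / pochR ρ (m + 1) - 1 / pochR ((n:ℝ) + ρ) (m + 1)) := by
  have key : ∀ j ∈ Finset.range n, 1 / pochR ((j:ℝ) + ρ) (m + 2)
      = (1 / ((m:ℝ)+1)) * ((fun j : ℕ => 1 / pochR ((j:ℝ) + ρ) (m+1)) j
          - (fun j : ℕ => 1 / pochR ((j:ℝ) + ρ) (m+1)) (j+1)) := by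
    intro j _
    have hj : (0:ℝ) < (j:ℝ) + ρ := by positivity
    have := pochR_telescope hj m
    simp only []
    have hc : ((j:ℝ) + 1 + ρ) = ((j:ℝ) + ρ) + 1 := by ring
    push_cast
    rw [hc, this]
    have hp : (0:ℝ) < pochR ((j:ℝ) + ρ) (m + 2) := pochR_pos hj _
    field_simp
  rw [Finset.sum_congr rfl key, ← Finset.mul_sum,
    Finset.sum_range_sub' (fun j : ℕ => 1 / pochR ((j:ℝ) + ρ) (m+1)) n]
  simp

lemma beta_eval (m : ℕ) {s : ℝ} (hs : 0 < s) :
    ∫ x in Set.Ioo (0:ℝ) 1, x ^ m * (1 - x) ^ (s - 1)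
      = (m.factorial : ℝ) / pochR s (m + 1) := by
  have hb := Complex.betaIntegral_eval_nat_add_one_right (u := (s:ℂ)) (by simpa using hs) m
  rw [← Complex.betaIntegral_symm] at hb
  have heq : Complex.betaIntegral ((m:ℂ) + 1) s
      = ((∫ x in (0:ℝ)..1, x ^ m * (1 - x) ^ (s - 1) : ℝ) : ℂ) := by
    rw [Complex.betaIntegral, ← intervalIntegral.integral_ofReal]
    apply intervalIntegral.integral_congr
    intro x hx
    rw [Set.uIcc_of_le zero_le_one] at hx
    have h1 : (0:ℝ) ≤ 1 - x := by linarith [hx.2]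
    dsimp only
    have e1 : ((m:ℂ) + 1 - 1) = ((m : ℕ) : ℂ) := by push_cast; ring
    have e2 : ((s:ℂ) - 1) = ((s - 1 : ℝ) : ℂ) := by push_cast; ring
    rw [e1, e2, Complex.cpow_natCast, ← Complex.ofReal_one, ← Complex.ofReal_sub,
      ← Complex.ofReal_cpow h1, ← Complex.ofReal_pow, ← Complex.ofReal_mul]
  rw [heq] at hb
  have hr : ((↑(m.factorial) : ℂ) / ∏ j ∈ Finset.range (m+1), ((s:ℂ) + (j:ℕ)))
      = (((m.factorial : ℝ) / pochR s (m+1) : ℝ) : ℂ) := by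
    rw [pochR_eq_prod]
    push_cast
    ring
  rw [hr] at hb
  have := Complex.ofReal_inj.mp hb
  rw [intervalIntegral.integral_of_le zero_le_one, integral_Ioc_eq_integral_Ioo] at this
  exact this

lemma contOn_one_sub_rpow (s : ℝ) :
    ContinuousOn (fun x : ℝ => (1 - x) ^ (s - 1)) (Set.Ioo (0:ℝ) 1) :=
  (continuousOn_const.sub continuousOn_id).rpow_const
    (fun x hx => Or.inl (by have := hx.2; intro h; simp only [Pi.sub_apply, id] at h; linarith))

lemma integrableOn_one_sub_rpow {s : ℝ} (hs : 0 < s) :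
    IntegrableOn (fun x : ℝ => (1 - x) ^ (s - 1)) (Set.Ioo (0:ℝ) 1) := by
  have h : IntervalIntegrable (fun x : ℝ => x ^ (s - 1)) volume 0 1 :=
    intervalIntegral.intervalIntegrable_rpow' (by linarith)
  have h2 : IntervalIntegrable (fun x : ℝ => (1 - x) ^ (s - 1)) volume 0 1 := by
    have := h.comp_sub_left 1
    simpa using this.symm
  have h3 := h2.def'
  rw [Set.uIoc_of_le zero_le_one] at h3
  exact h3.mono_set Set.Ioo_subset_Ioc_self

lemma integrableOn_mul_one_sub_rpow {s : ℝ} (hs : 0 < s) {φ : ℝ → ℝ} (hφ : Continuous φ) :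
    IntegrableOn (fun x : ℝ => φ x * (1 - x) ^ (s - 1)) (Set.Ioo (0:ℝ) 1) := by
  obtain ⟨C, hC⟩ : ∃ C, ∀ x ∈ Set.Icc (0:ℝ) 1, |φ x| ≤ C := by
    obtain ⟨C, hC⟩ := (isCompact_Icc (a := (0:ℝ)) (b := 1)).exists_bound_of_continuousOn
      hφ.continuousOn
    exact ⟨C, fun x hx => by simpa using hC x hx⟩
  apply Integrable.mono' ((integrableOn_one_sub_rpow hs).const_mul C)
  · exact (hφ.continuousOn.mul (contOn_one_sub_rpow s)).aestronglyMeasurable measurableSet_Ioo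
  · rw [ae_restrict_iff' measurableSet_Ioo]
    filter_upwards with x hx
    have h1 : (0:ℝ) < 1 - x := by linarith [hx.2]
    have hr : (0:ℝ) ≤ (1 - x) ^ (s - 1) := Real.rpow_nonneg h1.le _
    rw [Real.norm_eq_abs, abs_mul, abs_of_nonneg hr]
    exact mul_le_mul_of_nonneg_right (hC x ⟨hx.1.le, hx.2.le⟩) hr

lemma summable_gamma_poch {s γ : ℝ} (hs : 0 < s) (hγ : 0 ≤ γ) :
    Summable (fun m : ℕ => γ ^ m / pochR s (m + 1)) := by
  refine Summable.of_nonneg_of_le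
    (fun m => div_nonneg (pow_nonneg hγ m) (pochR_pos hs _).le)
    (fun m => ?_) ((Real.summable_pow_div_factorial γ).mul_left s⁻¹)
  have h1 : s * m.factorial ≤ pochR s (m + 1) := factorial_mul_le_pochR hs m
  have h2 : (0:ℝ) < s * m.factorial := by positivity
  have hm : (m.factorial : ℝ) ≠ 0 := Nat.cast_ne_zero.mpr m.factorial_ne_zero
  have he : s⁻¹ * (γ ^ m / m.factorial) = γ ^ m / (s * m.factorial) := by
    field_simp
  rw [he]
  gcongr

lemma F_eval {s : ℝ} (hs : 0 < s) {γ : ℝ} (hγ : 0 ≤ γ) :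
    ∫ x in Set.Ioo (0:ℝ) 1, Real.exp (γ * x) * (1 - x) ^ (s - 1)
      = ∑' m : ℕ, γ ^ m / pochR s (m + 1) := by
  set F : ℕ → ℝ → ℝ := fun m x => (γ ^ m / m.factorial) * (x ^ m * (1 - x) ^ (s - 1)) with hF
  have hint : ∀ m : ℕ, IntegrableOn (F m) (Set.Ioo (0:ℝ) 1) := by
    intro m
    have := (integrableOn_mul_one_sub_rpow hs
      (φ := fun x => (γ ^ m / m.factorial) * x ^ m)
      (by continuity))
    simpa [hF, mul_assoc] using this
  have hval : ∀ m : ℕ, ∫ x in Set.Ioo (0:ℝ) 1, F m x = γ ^ m / pochR s (m + 1) := by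
    intro m
    rw [hF]
    simp only
    rw [MeasureTheory.integral_const_mul, beta_eval m hs]
    have hm : (m.factorial : ℝ) ≠ 0 := Nat.cast_ne_zero.mpr m.factorial_ne_zero
    have hp : pochR s (m+1) ≠ 0 := (pochR_pos hs _).ne'
    field_simp
  have hnonneg : ∀ m : ℕ, ∀ x ∈ Set.Ioo (0:ℝ) 1, 0 ≤ F m x := by
    intro m x hx
    have h1 : (0:ℝ) < 1 - x := by linarith [hx.2]
    have := Real.rpow_nonneg h1.le (s - 1)
    have hx0 := hx.1.le
    positivity
  have hnorm : ∀ m : ℕ, ∫ x in Set.Ioo (0:ℝ) 1, ‖F m x‖ = γ ^ m / pochR s (m + 1) := by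
    intro m
    rw [← hval m]
    apply setIntegral_congr_fun measurableSet_Ioo
    intro x hx
    exact Real.norm_of_nonneg (hnonneg m x hx)
  have hsum : Summable (fun m : ℕ => ∫ x in Set.Ioo (0:ℝ) 1, ‖F m x‖) := by
    rw [funext hnorm]
    exact summable_gamma_poch hs hγ
  have hswap := MeasureTheory.integral_tsum_of_summable_integral_norm
      (μ := volume.restrict (Set.Ioo (0:ℝ) 1)) (F := F) hint hsum
  calc ∫ x in Set.Ioo (0:ℝ) 1, Real.exp (γ * x) * (1 - x) ^ (s - 1)
      = ∫ x in Set.Ioo (0:ℝ) 1, ∑' m : ℕ, F m x := by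
        apply setIntegral_congr_fun measurableSet_Ioo
        intro x _
        dsimp only
        have : Real.exp (γ * x) = ∑' m : ℕ, (γ * x) ^ m / m.factorial := by
          rw [Real.exp_eq_exp_ℝ, NormedSpace.exp_eq_tsum_div]
        rw [this, ← tsum_mul_right]
        apply tsum_congr
        intro m
        simp only [hF]
        rw [mul_pow]
        ring
    _ = ∑' m : ℕ, ∫ x in Set.Ioo (0:ℝ) 1, F m x := hswap.symm
    _ = ∑' m : ℕ, γ ^ m / pochR s (m + 1) := tsum_congr hval

lemma sum_choose_geom (n : ℕ) {x : ℝ} (hx0 : 0 < x) (hx1 : x < 1) :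
    ∑ k ∈ Finset.Icc 1 n, (n.choose k : ℝ) * (x ^ (k - 1) * (1 - x) ^ (n - k))
      = ∑ j ∈ Finset.range n, (1 - x) ^ j := by
  apply mul_left_cancel₀ hx0.ne'
  have key1 : x * ∑ k ∈ Finset.Icc 1 n, (n.choose k : ℝ) * (x ^ (k - 1) * (1 - x) ^ (n - k))
      = 1 - (1 - x) ^ n := by
    rw [Finset.mul_sum]
    have h1 : ∀ k ∈ Finset.Icc 1 n,
        x * ((n.choose k : ℝ) * (x ^ (k - 1) * (1 - x) ^ (n - k)))
          = x ^ k * (1 - x) ^ (n - k) * (n.choose k : ℝ) := by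
      intro k hk
      obtain ⟨hk1, hk2⟩ := Finset.mem_Icc.mp hk
      obtain ⟨j, rfl⟩ := Nat.exists_eq_add_of_le hk1
      have : x ^ (1 + j) = x * x ^ (1 + j - 1) := by
        rw [Nat.add_sub_cancel_left, pow_add, pow_one]
      rw [this]
      ring
    rw [Finset.sum_congr rfl h1]
    have h2 : ∑ k ∈ Finset.Icc 1 n, x ^ k * (1 - x) ^ (n - k) * (n.choose k : ℝ)
        = (∑ k ∈ Finset.range (n+1), x ^ k * (1 - x) ^ (n - k) * (n.choose k : ℝ))
          - (1 - x) ^ n := by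
      rw [Finset.sum_range_succ' (fun k => x ^ k * (1 - x) ^ (n - k) * (n.choose k : ℝ)) n]
      simp only [pow_zero, Nat.sub_zero, Nat.choose_zero_right, Nat.cast_one, one_mul, mul_one]
      have h3 : ∑ k ∈ Finset.Icc 1 n, x ^ k * (1 - x) ^ (n - k) * (n.choose k : ℝ)
          = ∑ i ∈ Finset.range n, x ^ (1 + i) * (1 - x) ^ (n - (1 + i)) * (n.choose (1 + i) : ℝ) := by
        rw [← Finset.Ico_add_one_right_eq_Icc, Finset.sum_Ico_eq_sum_range]
        simp
      rw [h3]
      simp only [Nat.add_comm 1]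
      ring
    rw [h2, ← add_pow x (1 - x) n]
    simp
  have key2 : x * ∑ j ∈ Finset.range n, (1 - x) ^ j = 1 - (1 - x) ^ n := by
    have := geom_sum_mul (1 - x) n
    rw [Finset.mul_sum]
    rw [Finset.sum_mul] at this
    have e : ∀ j, x * (1 - x) ^ j = -((1 - x) ^ j * ((1 - x) - 1)) := by intro j; ring
    calc ∑ j ∈ Finset.range n, x * (1 - x) ^ j
        = -∑ j ∈ Finset.range n, (1 - x) ^ j * ((1 - x) - 1) := by
          rw [← Finset.sum_neg_distrib]
          exact Finset.sum_congr rfl fun j _ => e j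
      _ = -((1 - x) ^ n - 1) := by rw [this]
      _ = 1 - (1 - x) ^ n := by ring
  rw [key1, key2]

/-- Corollary 2, `E[G^{(n)}]`: for `n ≥ 1`, `θ > 0`, `ρ > 0`, `γ ≥ 0`,
`Σ_{k=1}^n C(n,k) ∫₀¹ θ e^{γx} x^{k-1} (1-x)^{n-k-1+ρ} dx
  = θ Σ_{k=0}^{n-1} 1/(k+ρ) + θ Σ_{m≥1} (γ^m/m)(1/(ρ)_m − 1/(n+ρ)_m)`. -/
theorem expected_pangenome_size
    (n : ℕ) (hn : 1 ≤ n) (θ ρ γ : ℝ) (hθ : 0 < θ) (hρ : 0 < ρ) (hγ : 0 ≤ γ) :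
    ∑ k ∈ Finset.Icc 1 n,
        (n.choose k : ℝ) *
          ∫ x in Set.Ioo (0 : ℝ) 1,
            θ * Real.exp (γ * x) * x ^ (k - 1) * (1 - x) ^ ((n : ℝ) - k - 1 + ρ) =
      θ * ∑ k ∈ Finset.range n, 1 / ((k : ℝ) + ρ) +
        θ * ∑' m : ℕ,
          γ ^ (m + 1) / (m + 1) *
            (1 / pochR ρ (m + 1) - 1 / pochR ((n : ℝ) + ρ) (m + 1)) := by
  have hI : MeasurableSet (Set.Ioo (0:ℝ) 1) := measurableSet_Ioo
  have hexp : ∀ k, k ≤ n → ((n : ℝ) - k - 1 + ρ) = (((n - k : ℕ):ℝ) + ρ) - 1 := by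
    intro k hk2
    rw [Nat.cast_sub hk2]
    ring
  have hint : ∀ k ∈ Finset.Icc 1 n, IntegrableOn (fun x : ℝ => (n.choose k : ℝ) *
      (θ * Real.exp (γ * x) * x ^ (k - 1) * (1 - x) ^ ((n : ℝ) - k - 1 + ρ)))
      (Set.Ioo (0:ℝ) 1) := by
    intro k hk
    obtain ⟨hk1, hk2⟩ := Finset.mem_Icc.mp hk
    have hs : (0:ℝ) < ((n - k : ℕ):ℝ) + ρ := by positivity
    have h := integrableOn_mul_one_sub_rpow hs
      (φ := fun x => (n.choose k : ℝ) * (θ * Real.exp (γ * x) * x ^ (k-1)))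
      (by continuity)
    have heq : (fun x : ℝ => (n.choose k : ℝ) *
        (θ * Real.exp (γ * x) * x ^ (k - 1) * (1 - x) ^ ((n : ℝ) - k - 1 + ρ)))
        = (fun x : ℝ => ((n.choose k : ℝ) * (θ * Real.exp (γ * x) * x ^ (k-1)))
            * (1 - x) ^ ((((n - k : ℕ):ℝ) + ρ) - 1)) := by
      funext x
      rw [hexp k hk2]
      ring
    rw [heq]
    exact h
  have step1 : ∑ k ∈ Finset.Icc 1 n, (n.choose k : ℝ) * ∫ x in Set.Ioo (0:ℝ) 1,
        θ * Real.exp (γ * x) * x ^ (k - 1) * (1 - x) ^ ((n : ℝ) - k - 1 + ρ)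
      = ∫ x in Set.Ioo (0:ℝ) 1, ∑ k ∈ Finset.Icc 1 n, (n.choose k : ℝ) *
        (θ * Real.exp (γ * x) * x ^ (k - 1) * (1 - x) ^ ((n : ℝ) - k - 1 + ρ)) := by
    rw [integral_finset_sum _ hint]
    exact Finset.sum_congr rfl fun k _ => (integral_const_mul _ _).symm
  have step2 : ∫ x in Set.Ioo (0:ℝ) 1, ∑ k ∈ Finset.Icc 1 n, (n.choose k : ℝ) *
        (θ * Real.exp (γ * x) * x ^ (k - 1) * (1 - x) ^ ((n : ℝ) - k - 1 + ρ))
      = ∫ x in Set.Ioo (0:ℝ) 1, ∑ j ∈ Finset.range n,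
          (θ * Real.exp (γ * x)) * (1 - x) ^ ((((j:ℝ) + ρ)) - 1) := by
    apply setIntegral_congr_fun hI
    intro x hx
    obtain ⟨hx0, hx1⟩ := hx
    have h1x : (0:ℝ) < 1 - x := by linarith
    dsimp only
    calc ∑ k ∈ Finset.Icc 1 n, (n.choose k : ℝ) *
          (θ * Real.exp (γ * x) * x ^ (k - 1) * (1 - x) ^ ((n : ℝ) - k - 1 + ρ))
        = (θ * Real.exp (γ * x) * (1 - x) ^ (ρ - 1)) *
            ∑ k ∈ Finset.Icc 1 n, (n.choose k : ℝ) * (x ^ (k - 1) * (1 - x) ^ (n - k)) := by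
          rw [Finset.mul_sum]
          refine Finset.sum_congr rfl fun k hk => ?_
          obtain ⟨hk1, hk2⟩ := Finset.mem_Icc.mp hk
          rw [hexp k hk2]
          have hsplit : (1 - x) ^ ((((n - k : ℕ):ℝ) + ρ) - 1)
              = (1 - x) ^ (n - k : ℕ) * (1 - x) ^ (ρ - 1) := by
            rw [← Real.rpow_natCast (1 - x) (n - k), ← Real.rpow_add h1x]
            congr 1
            ring
          rw [hsplit]
          ring
      _ = (θ * Real.exp (γ * x) * (1 - x) ^ (ρ - 1)) * ∑ j ∈ Finset.range n, (1 - x) ^ j := by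
          rw [sum_choose_geom n hx0 hx1]
      _ = ∑ j ∈ Finset.range n, (θ * Real.exp (γ * x)) * (1 - x) ^ ((((j:ℝ) + ρ)) - 1) := by
          rw [Finset.mul_sum]
          refine Finset.sum_congr rfl fun j _ => ?_
          have hsplit : (1 - x) ^ ((((j:ℕ):ℝ) + ρ) - 1)
              = (1 - x) ^ (j : ℕ) * (1 - x) ^ (ρ - 1) := by
            rw [← Real.rpow_natCast (1 - x) j, ← Real.rpow_add h1x]
            congr 1
            ring
          rw [hsplit]
          ring
  have step3 : ∫ x in Set.Ioo (0:ℝ) 1, ∑ j ∈ Finset.range n,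
          (θ * Real.exp (γ * x)) * (1 - x) ^ ((((j:ℝ) + ρ)) - 1)
      = ∑ j ∈ Finset.range n, θ * ∑' m : ℕ, γ ^ m / pochR ((j:ℝ) + ρ) (m + 1) := by
    rw [integral_finset_sum]
    · refine Finset.sum_congr rfl fun j _ => ?_
      have hs : (0:ℝ) < (j:ℝ) + ρ := by positivity
      calc ∫ x in Set.Ioo (0:ℝ) 1, (θ * Real.exp (γ * x)) * (1 - x) ^ ((((j:ℝ) + ρ)) - 1)
          = ∫ x in Set.Ioo (0:ℝ) 1, θ * (Real.exp (γ * x) * (1 - x) ^ ((((j:ℝ) + ρ)) - 1)) := by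
            apply setIntegral_congr_fun hI
            intro x _
            ring
        _ = θ * ∫ x in Set.Ioo (0:ℝ) 1, Real.exp (γ * x) * (1 - x) ^ ((((j:ℝ) + ρ)) - 1) :=
            integral_const_mul θ _
        _ = θ * ∑' m : ℕ, γ ^ m / pochR ((j:ℝ) + ρ) (m + 1) := by rw [F_eval hs hγ]
    · intro j _
      have hs : (0:ℝ) < (j:ℝ) + ρ := by positivity
      exact integrableOn_mul_one_sub_rpow hs (φ := fun x => θ * Real.exp (γ * x)) (by continuity)
  have hSj : ∀ j : ℕ, Summable (fun m : ℕ => γ ^ m / pochR ((j:ℝ) + ρ) (m + 1)) :=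
    fun j => summable_gamma_poch (by positivity) hγ
  have hsumh : Summable (fun m : ℕ => ∑ j ∈ Finset.range n,
      γ ^ m / pochR ((j:ℝ) + ρ) (m + 1)) :=
    (hasSum_sum (fun j _ => (hSj j).hasSum)).summable
  rw [step1, step2, step3]
  calc ∑ j ∈ Finset.range n, θ * ∑' m : ℕ, γ ^ m / pochR ((j:ℝ) + ρ) (m + 1)
      = θ * ∑ j ∈ Finset.range n, ∑' m : ℕ, γ ^ m / pochR ((j:ℝ) + ρ) (m + 1) := by
        rw [Finset.mul_sum]
    _ = θ * ∑' m : ℕ, ∑ j ∈ Finset.range n, γ ^ m / pochR ((j:ℝ) + ρ) (m + 1) := by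
        rw [Summable.tsum_finsetSum (fun j _ => hSj j)]
    _ = θ * ((∑ j ∈ Finset.range n, γ ^ 0 / pochR ((j:ℝ) + ρ) (0 + 1)) +
          ∑' m : ℕ, ∑ j ∈ Finset.range n, γ ^ (m + 1) / pochR ((j:ℝ) + ρ) (m + 1 + 1)) := by
        rw [Summable.tsum_eq_zero_add hsumh]
    _ = θ * ∑ k ∈ Finset.range n, 1 / ((k : ℝ) + ρ) +
        θ * ∑' m : ℕ, γ ^ (m + 1) / (m + 1) *
            (1 / pochR ρ (m + 1) - 1 / pochR ((n : ℝ) + ρ) (m + 1)) := by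
        rw [mul_add]
        congr 1
        · congr 1
          refine Finset.sum_congr rfl fun j _ => ?_
          rw [pow_zero, pochR_one]
        · congr 1
          refine tsum_congr fun m => ?_
          have e : ∀ j ∈ Finset.range n, γ ^ (m + 1) / pochR ((j:ℝ) + ρ) (m + 1 + 1)
              = γ ^ (m + 1) * (1 / pochR ((j:ℝ) + ρ) (m + 1 + 1)) := fun j _ => by
            rw [div_eq_mul_one_div]
          have h21 : m + 1 + 1 = m + 2 := rfl
          rw [Finset.sum_congr rfl e, ← Finset.mul_sum, h21, pochR_sum_telescope hρ n m]
          ring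
end
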